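/- P(μ) is not μ⁺-cc below any condition: for every condition (s,f) ∈ P(μ) there is an antichain of cardinality μ⁺ below (s,f). In particular, for any fixed ζ above sup(s ∪ ⋃ ran f), the conditions p_β = (s ∪ {ζ}, f ∪ {ζ ↦ {β}}) for β ∈ (ζ, μ⁺) are pairwise incompatible extensions of (s,f). -/

import Mathlib

/-- A condition in the club-adding poset `P(μ)`: a pair `(s, f)` with
`s ∈ [μ⁺ \ μ]^{<μ}`, `f : s → [μ⁺ \ μ]^{<μ}`, and `f ξ ⊆ ξ'` whenever `ξ < ξ'`
are both in `s`.  (The function `f` is represented as a total function on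
ordinals that takes value `∅` off `s`.) -/
structure PCond (μ : Cardinal.{0}) where
  s : Set Ordinal.{0}
  f : Ordinal.{0} → Set Ordinal.{0}
  hs : s ⊆ Set.Ico μ.ord (Order.succ μ).ord
  hscard : Cardinal.mk s < Cardinal.lift.{1} μ
  hfsub : ∀ ξ ∈ s, f ξ ⊆ Set.Ico μ.ord (Order.succ μ).ord
  hfcard : ∀ ξ ∈ s, Cardinal.mk (f ξ) < Cardinal.lift.{1} μ
  hmono : ∀ ξ ∈ s, ∀ ξ' ∈ s, ξ < ξ' → f ξ ⊆ Set.Iio ξ'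
  hdom : ∀ ξ, ξ ∉ s → f ξ = ∅

/-- `PLe p q`: the condition `p` extends the condition `q`, i.e. `p ≤ q`. -/
def PLe {μ : Cardinal.{0}} (p q : PCond μ) : Prop :=
  q.s ⊆ p.s ∧ ∀ ξ ∈ q.s, q.f ξ ⊆ p.f ξ

open scoped Cardinal

/-- Extend a condition `p` by adding `ζ` and `β + 1` to the domain and setting
`f ζ = {β}`. -/
noncomputable def extCond (μ : Cardinal.{0}) (hμ0 : ℵ₀ ≤ μ) (p : PCond μ) (ζ β : Ordinal.{0})
    (hζ1 : μ.ord ≤ ζ) (hζo : ζ < (Order.succ μ).ord)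
    (hζT : ∀ ξ ∈ p.s, ξ < ζ) (hζf : ∀ ξ ∈ p.s, p.f ξ ⊆ Set.Iio ζ)
    (hβ : ζ < β) (hβo : β + 1 < (Order.succ μ).ord) : PCond μ where
  s := insert (β + 1) (insert ζ p.s)
  f := Function.update p.f ζ {β}
  hs := by
    intro ξ hξ
    rcases hξ with rfl | rfl | hξ
    · exact ⟨hζ1.trans (le_of_lt (hβ.trans (lt_add_one β))), hβo⟩
    · exact ⟨hζ1, hζo⟩
    · exact p.hs hξ
  hscard := by
    have h1 : ℵ₀ ≤ Cardinal.lift.{1} μ := Cardinal.aleph0_le_lift.2 hμ0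
    have h2 : (1 : Cardinal.{1}) < Cardinal.lift.{1} μ := lt_of_lt_of_le Cardinal.one_lt_aleph0 h1
    calc Cardinal.mk (insert (β + 1) (insert ζ p.s) : Set Ordinal.{0})
        ≤ Cardinal.mk (insert ζ p.s : Set Ordinal.{0}) + 1 := Cardinal.mk_insert_le
      _ ≤ Cardinal.mk p.s + 1 + 1 := by gcongr; exact Cardinal.mk_insert_le
      _ < Cardinal.lift.{1} μ :=
          Cardinal.add_lt_of_lt h1 (Cardinal.add_lt_of_lt h1 p.hscard h2) h2
  hfsub := by
    intro ξ _ η hη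
    by_cases hξζ : ξ = ζ
    · subst hξζ
      rw [Function.update_self] at hη
      rw [Set.mem_singleton_iff] at hη
      subst hη
      exact ⟨hζ1.trans hβ.le, lt_trans (lt_add_one _) hβo⟩
    · rw [Function.update_of_ne hξζ] at hη
      by_cases hξs : ξ ∈ p.s
      · exact p.hfsub ξ hξs hη
      · rw [p.hdom ξ hξs] at hη; exact absurd hη (Set.notMem_empty η)
  hfcard := by
    intro ξ _
    by_cases hξζ : ξ = ζ
    · subst hξζ
      rw [Function.update_self, Cardinal.mk_singleton]
      exact lt_of_lt_of_le Cardinal.one_lt_aleph0 (Cardinal.aleph0_le_lift.2 hμ0)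
    · rw [Function.update_of_ne hξζ]
      by_cases hξs : ξ ∈ p.s
      · exact p.hfcard ξ hξs
      · rw [p.hdom ξ hξs]
        have h0 : Cardinal.mk ((∅ : Set Ordinal.{0}) : Set Ordinal.{0}) = 0 :=
          Cardinal.mk_emptyCollection _
        rw [h0]
        exact lt_of_lt_of_le Cardinal.aleph0_pos (Cardinal.aleph0_le_lift.2 hμ0)
  hmono := by
    intro ξ hξ ξ' hξ' hlt η hη
    have hζβ1 : ζ < β + 1 := hβ.trans (lt_add_one β)
    by_cases hξζ : ξ = ζ
    · subst hξζ
      rw [Function.update_self, Set.mem_singleton_iff] at hη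
      subst hη
      rcases hξ' with rfl | rfl | hξ'
      · exact Set.mem_Iio.2 (lt_add_one _)
      · exact absurd hlt (lt_irrefl _)
      · exact absurd (hζT ξ' hξ') (not_lt.2 hlt.le)
    · rw [Function.update_of_ne hξζ] at hη
      by_cases hξs : ξ ∈ p.s
      · have hηζ : η < ζ := hζf ξ hξs hη
        rcases hξ' with rfl | rfl | hξ'
        · exact hηζ.trans hζβ1
        · exact hηζ
        · exact p.hmono ξ hξs ξ' hξ' hlt hη
      · rw [p.hdom ξ hξs] at hη; exact absurd hη (Set.notMem_empty η)
  hdom := by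
    intro ξ hξ
    have hξζ : ξ ≠ ζ := fun h => hξ (Or.inr (Or.inl h))
    have hξs : ξ ∉ p.s := fun h => hξ (Or.inr (Or.inr h))
    rw [Function.update_of_ne hξζ]
    exact p.hdom ξ hξs

theorem extCond_f_zeta (μ : Cardinal.{0}) (hμ0 : ℵ₀ ≤ μ) (p : PCond μ) (ζ β : Ordinal.{0})
    (hζ1 : μ.ord ≤ ζ) (hζo : ζ < (Order.succ μ).ord)
    (hζT : ∀ ξ ∈ p.s, ξ < ζ) (hζf : ∀ ξ ∈ p.s, p.f ξ ⊆ Set.Iio ζ)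
    (hβ : ζ < β) (hβo : β + 1 < (Order.succ μ).ord) :
    (extCond μ hμ0 p ζ β hζ1 hζo hζT hζf hβ hβo).f ζ = {β} := by
  simp [extCond, Function.update_self]

/-- `P(μ)` is not `μ⁺`-cc below any condition: below every condition there is an
antichain of cardinality `μ⁺`. -/
theorem stmt8 (μ : Cardinal.{0}) (hμ : μ.IsRegular) (p : PCond μ) :
    ∃ A : Set (PCond μ),
      (∀ q ∈ A, PLe q p) ∧
      (∀ q ∈ A, ∀ r ∈ A, q ≠ r → ¬∃ t : PCond μ, PLe t q ∧ PLe t r) ∧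
      Cardinal.mk A = Cardinal.lift.{1} (Order.succ μ) := by
  have hμ0 : ℵ₀ ≤ μ := hμ.aleph0_le
  have hμ0' : ℵ₀ ≤ Cardinal.lift.{1} μ := Cardinal.aleph0_le_lift.2 hμ0
  set o : Ordinal.{0} := (Order.succ μ).ord with ho
  have hμlt : μ.ord < o := Cardinal.ord_lt_ord.2 (Order.lt_succ μ)
  have hsucc0 : ℵ₀ ≤ Order.succ μ := hμ0.trans (le_of_lt (Order.lt_succ μ))
  have holim : Order.IsSuccLimit o := Cardinal.isSuccLimit_ord hsucc0
  -- the set of ordinals appearing in p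
  set T : Set Ordinal.{0} := p.s ∪ ⋃ ξ ∈ p.s, p.f ξ with hT
  have hTo : ∀ t ∈ T, t < o := by
    intro t ht
    rcases ht with ht | ht
    · exact (p.hs ht).2
    · obtain ⟨ξ, hξ, htξ⟩ := Set.mem_iUnion₂.1 ht
      exact (p.hfsub ξ hξ htξ).2
  have hTcard : Cardinal.mk T ≤ Cardinal.lift.{1} μ := by
    calc Cardinal.mk T ≤ Cardinal.mk p.s + Cardinal.mk (⋃ ξ ∈ p.s, p.f ξ) :=
          Cardinal.mk_union_le _ _
      _ ≤ Cardinal.mk p.s + Cardinal.mk p.s * ⨆ ξ : p.s, Cardinal.mk (p.f ξ) := by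
          gcongr; exact Cardinal.mk_biUnion_le _ _
      _ ≤ Cardinal.lift.{1} μ + Cardinal.lift.{1} μ * Cardinal.lift.{1} μ := by
          gcongr
          · exact p.hscard.le
          · exact p.hscard.le
          · exact ciSup_le' fun ξ => (p.hfcard ξ ξ.2).le
      _ = Cardinal.lift.{1} μ := by
          rw [Cardinal.mul_eq_self hμ0', Cardinal.add_eq_self hμ0']
  -- get an embedding of T into a type in universe 0
  obtain ⟨e⟩ : Nonempty (T ↪ μ.out) := by
    rw [← Cardinal.lift_mk_le']
    simpa [Cardinal.mk_out] using hTcard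
  classical
  set g : μ.out → Ordinal.{0} := fun x =>
    if h : ∃ t : T, e t = x then (h.choose : Ordinal) else 0 with hg
  have hgo : ∀ x, g x < o := by
    intro x
    by_cases hx : ∃ t : T, e t = x
    · have h1 : g x = ((hx.choose : T) : Ordinal) := dif_pos hx
      rw [h1]
      exact hTo _ hx.choose.2
    · have h1 : g x = 0 := dif_neg hx
      rw [h1]
      exact lt_of_le_of_lt (zero_le) hμlt
  have hsup : iSup g < o :=
    Cardinal.iSup_lt_ord_of_isRegular (Cardinal.isRegular_succ hμ0)
      (by rw [Cardinal.mk_out]; exact Order.lt_succ μ) hgo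
  have hle : ∀ t ∈ T, t ≤ iSup g := by
    intro t ht
    have hex : ∃ t' : T, e t' = e ⟨t, ht⟩ := ⟨⟨t, ht⟩, rfl⟩
    have h1 : g (e ⟨t, ht⟩) = ((hex.choose : T) : Ordinal) := dif_pos hex
    have h2 : hex.choose = (⟨t, ht⟩ : T) := e.injective hex.choose_spec
    rw [h2] at h1
    rw [show t = ((⟨t, ht⟩ : T) : Ordinal) from rfl, ← h1]
    exact Ordinal.le_iSup g _
  set ζ : Ordinal.{0} := max μ.ord (Order.succ (iSup g)) with hζ
  have hζ1 : μ.ord ≤ ζ := le_max_left _ _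
  have hζo : ζ < o := max_lt hμlt (holim.succ_lt hsup)
  have hζT : ∀ ξ ∈ p.s, ξ < ζ := fun ξ hξ =>
    lt_of_le_of_lt (hle ξ (Or.inl hξ)) (lt_of_lt_of_le (Order.lt_succ _) (le_max_right _ _))
  have hζf : ∀ ξ ∈ p.s, p.f ξ ⊆ Set.Iio ζ := by
    intro ξ hξ η hη
    have : η ∈ T := Or.inr (Set.mem_iUnion₂.2 ⟨ξ, hξ, hη⟩)
    exact lt_of_le_of_lt (hle η this) (lt_of_lt_of_le (Order.lt_succ _) (le_max_right _ _))
  -- the conditions of the antichain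
  have hβ : ∀ b : Ordinal.{0}, ζ < ζ + 1 + b :=
    fun b => lt_of_lt_of_le (lt_add_one ζ) le_self_add
  have hβo : ∀ b < o, (ζ + 1 + b) + 1 < o := by
    intro b hb
    rw [ho, Cardinal.lt_ord]
    simp only [Ordinal.card_add, Ordinal.card_one]
    have h1 : (1 : Cardinal) < Order.succ μ :=
      lt_of_lt_of_le Cardinal.one_lt_aleph0 hsucc0
    have hζc : ζ.card < Order.succ μ := Cardinal.lt_ord.1 hζo
    have hbc : b.card < Order.succ μ := Cardinal.lt_ord.1 hb
    exact Cardinal.add_lt_of_lt hsucc0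
      (Cardinal.add_lt_of_lt hsucc0 (Cardinal.add_lt_of_lt hsucc0 hζc h1) hbc) h1
  set Q : Ordinal.{0} → PCond μ := fun b =>
    if hb : b < o then
      extCond μ hμ0 p ζ (ζ + 1 + b) hζ1 hζo hζT hζf (hβ b) (hβo b hb)
    else p with hQ
  have hQf : ∀ b < o, (Q b).f ζ = {ζ + 1 + b} := by
    intro b hb
    rw [hQ]
    simp only [dif_pos hb]
    exact extCond_f_zeta μ hμ0 p ζ (ζ + 1 + b) hζ1 hζo hζT hζf (hβ b) (hβo b hb)
  have hQs : ∀ b < o, (Q b).s = insert ((ζ + 1 + b) + 1) (insert ζ p.s) := by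
    intro b hb
    rw [hQ]
    simp only [dif_pos hb]
    rfl
  refine ⟨Q '' Set.Iio o, ?_, ?_, ?_⟩
  · -- every element extends p
    rintro q ⟨b, hb, rfl⟩
    constructor
    · rw [hQs b hb]
      exact fun ξ hξ => Or.inr (Or.inr hξ)
    · intro ξ hξ
      have hne : ξ ≠ ζ := fun h => absurd (hζT ξ hξ) (by rw [h]; exact lt_irrefl ζ)
      have hQb : Q b = extCond μ hμ0 p ζ (ζ + 1 + b) hζ1 hζo hζT hζf (hβ b) (hβo b hb) :=
        dif_pos hb
      rw [hQb]
      show p.f ξ ⊆ Function.update p.f ζ {ζ + 1 + b} ξ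
      rw [Function.update_of_ne hne]
  · -- pairwise incompatible
    have key : ∀ b < o, ∀ b' < o, b < b' →
        ¬∃ t : PCond μ, PLe t (Q b) ∧ PLe t (Q b') := by
      rintro b hb b' hb' hlt ⟨t, ⟨hts, _⟩, ⟨hts', htf'⟩⟩
      have hζt : ζ ∈ t.s := by
        apply hts
        rw [hQs b hb]; exact Or.inr (Or.inl rfl)
      have hβ1t : (ζ + 1 + b) + 1 ∈ t.s := by
        apply hts
        rw [hQs b hb]; exact Or.inl rfl
      have hζQ' : ζ ∈ (Q b').s := by rw [hQs b' hb']; exact Or.inr (Or.inl rfl)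
      have hβ't : ζ + 1 + b' ∈ t.f ζ := by
        apply htf' ζ hζQ'
        rw [hQf b' hb']
        rfl
      have := t.hmono ζ hζt ((ζ + 1 + b) + 1) hβ1t
        (lt_of_lt_of_le (hβ b) (le_of_lt (lt_add_one _))) hβ't
      have hcontra : ζ + 1 + b' < (ζ + 1 + b) + 1 := this
      have : ζ + 1 + b' ≤ ζ + 1 + b := Order.lt_succ_iff.1 (by
        rwa [Ordinal.add_one_eq_succ] at hcontra)
      have : b' ≤ b := le_of_not_gt fun h =>
        absurd ((add_lt_add_iff_left (ζ + 1)).2 h) (not_lt.2 this)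
      exact absurd hlt (not_lt.2 this)
    rintro q ⟨b, hb, rfl⟩ r ⟨b', hb', rfl⟩ hne
    rcases lt_trichotomy b b' with h | h | h
    · exact key b hb b' hb' h
    · exact absurd (congrArg Q h) hne
    · intro ⟨t, ht1, ht2⟩
      exact key b' hb' b hb h ⟨t, ht2, ht1⟩
  · -- cardinality
    have hinj : Set.InjOn Q (Set.Iio o) := by
      intro b hb b' hb' hQeq
      have : ({ζ + 1 + b} : Set Ordinal) = {ζ + 1 + b'} := by
        rw [← hQf b hb, ← hQf b' hb', hQeq]
      have := Set.singleton_eq_singleton_iff.1 this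
      exact (add_right_inj (ζ + 1)).1 this
    rw [Cardinal.mk_image_eq_of_injOn Q _ hinj, Ordinal.mk_Iio_ordinal, ho,
      Cardinal.card_ord]
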